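/- Formal inversion of a near-identity polynomial transformation: Suppose w_k = z_k - α P_k(z) for k = 1,...,n, where each P_k is a polynomial of lower degree at least d ≥ 2. Then z can be expressed as a formal power series in α: z_k = w_k + α P_k(w) + α^2 R_{k,2}(w) + α^3 R_{k,3}(w) + ..., where each R_{k,t} is a polynomial of lower degree at least (d-1)t + 1. -/

import Mathlib

open MvPolynomial Complex

abbrev PolyN (n : ℕ) := MvPolynomial (Fin n ⊕ Fin n) ℂ

/-- Conjugate polynomial: conjugate coefficients and swap each variable `z_j` with `z̄_j`. -/
noncomputable def conjP {n : ℕ} (R : PolyN n) : PolyN n :=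
  MvPolynomial.map (starRingEnd ℂ) (rename Sum.swap R)

/-- The bracket `[R‖S]`: formal derivative of `R` along `ż_j = S_j`, `ż̄_j = conj (S_j)`. -/
noncomputable def bracket {n : ℕ} (R : PolyN n) (S : Fin n → PolyN n) : PolyN n :=
  ∑ j : Fin n, (pderiv (Sum.inl j) R * S j + pderiv (Sum.inr j) R * conjP (S j))

/-- Total degree of a monomial exponent. -/
def mdeg {σ : Type*} (m : σ →₀ ℕ) : ℕ := m.sum fun _ e => e

namespace FormalInv

variable {n : ℕ}

abbrev PS (n : ℕ) := PowerSeries (PolyN n)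

lemma mdeg_add {σ : Type*} (m₁ m₂ : σ →₀ ℕ) : mdeg (m₁ + m₂) = mdeg m₁ + mdeg m₂ :=
  Finsupp.sum_add_index' (fun _ => rfl) (fun _ _ _ => rfl)

lemma mdeg_mapDomain {σ τ : Type*} (f : σ → τ) (m : σ →₀ ℕ) :
    mdeg (Finsupp.mapDomain f m) = mdeg m :=
  Finsupp.sum_mapDomain_index (fun _ => rfl) (fun _ _ _ => rfl)

/-- weight predicate: every monomial of the `s`-th coefficient has degree ≥ a*s + c. -/
def Wt (a c : ℕ) (f : PS n) : Prop :=
  ∀ s : ℕ, ∀ m ∈ (PowerSeries.coeff (R := PolyN n) s f).support, a * s + c ≤ mdeg m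

lemma Wt.mono {a c c' : ℕ} {f : PS n} (h : Wt a c f) (hc : c' ≤ c) : Wt a c' f :=
  fun s m hm => le_trans (by omega) (h s m hm)

lemma Wt.add {a c : ℕ} {f g : PS n} (hf : Wt a c f) (hg : Wt a c g) : Wt a c (f + g) := by
  intro s m hm
  rw [map_add] at hm
  rcases Finset.mem_union.mp (MvPolynomial.support_add hm) with h | h
  · exact hf s m h
  · exact hg s m h

lemma mem_support_sum {σ' : Type*} {s : Finset σ'} {f : σ' → PolyN n} {m : Fin n ⊕ Fin n →₀ ℕ}
    (hm : m ∈ (∑ i ∈ s, f i).support) : ∃ i ∈ s, m ∈ (f i).support := by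
  by_contra hc
  push_neg at hc
  have : MvPolynomial.coeff m (∑ i ∈ s, f i) = 0 := by
    rw [MvPolynomial.coeff_sum]
    exact Finset.sum_eq_zero fun i hi => by
      have := hc i hi; rwa [MvPolynomial.notMem_support_iff] at this
  exact (MvPolynomial.mem_support_iff.mp hm) this

lemma Wt.sum {σ' : Type*} {a c : ℕ} {s : Finset σ'} {f : σ' → PS n}
    (h : ∀ i ∈ s, Wt a c (f i)) : Wt a c (∑ i ∈ s, f i) := by
  intro t m hm
  rw [map_sum] at hm
  obtain ⟨i, hi, hmi⟩ := mem_support_sum hm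
  exact h i hi t m hmi

lemma Wt.mul {a b c : ℕ} {f g : PS n} (hf : Wt a b f) (hg : Wt a c g) :
    Wt a (b + c) (f * g) := by
  intro s m hm
  rw [PowerSeries.coeff_mul] at hm
  obtain ⟨p, hp, hmp⟩ := mem_support_sum hm
  have hps : p.1 + p.2 = s := Finset.HasAntidiagonal.mem_antidiagonal.mp hp
  obtain ⟨m₁, hm₁, m₂, hm₂, hm12⟩ := Finset.mem_add.mp (MvPolynomial.support_mul _ _ hmp)
  have h1 := hf p.1 m₁ hm₁
  have h2 := hg p.2 m₂ hm₂
  subst hm12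
  rw [mdeg_add]
  calc a * s + (b + c) = (a * p.1 + b) + (a * p.2 + c) := by rw [← hps]; ring
  _ ≤ mdeg m₁ + mdeg m₂ := Nat.add_le_add h1 h2

lemma Wt.C_poly {a c : ℕ} {p : PolyN n} (h : ∀ m ∈ p.support, c ≤ mdeg m) :
    Wt a c (PowerSeries.C (R := PolyN n) p) := by
  intro s m hm
  rw [PowerSeries.coeff_C] at hm
  by_cases hs : s = 0
  · subst hs; simp only [if_pos rfl] at hm
    simpa using h m hm
  · rw [if_neg hs] at hm; simp at hm

lemma Wt.one {a : ℕ} : Wt (n := n) a 0 1 := by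
  have := Wt.C_poly (n := n) (a := a) (c := 0) (p := 1) (fun m _ => Nat.zero_le _)
  simpa using this

lemma Wt.pow {a c : ℕ} {f : PS n} (hf : Wt a c f) (e : ℕ) : Wt a (c * e) (f ^ e) := by
  induction e with
  | zero => simpa using Wt.one
  | succ e ih =>
      have h : c * (e + 1) = c * e + c := by ring
      rw [pow_succ, h]
      exact Wt.mul ih hf

lemma Wt.prod {σ' : Type*} {a : ℕ} {s : Finset σ'} {f : σ' → PS n} {c : σ' → ℕ}
    (h : ∀ i ∈ s, Wt a (c i) (f i)) : Wt a (∑ i ∈ s, c i) (∏ i ∈ s, f i) := by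
  classical
  induction s using Finset.induction_on with
  | empty => simpa using Wt.one
  | @insert x t hx ih =>
      rw [Finset.prod_insert hx, Finset.sum_insert hx]
      exact Wt.mul (h x (Finset.mem_insert_self _ _))
        (ih fun i hi => h i (Finset.mem_insert_of_mem hi))

lemma Wt.algebraMap' {a : ℕ} (r : ℂ) : Wt (n := n) a 0 (algebraMap ℂ (PS n) r) := by
  rw [PowerSeries.algebraMap_apply]
  exact Wt.C_poly (fun m _ => Nat.zero_le _)

lemma wt_aeval {a D : ℕ} {F : Fin n ⊕ Fin n → PS n} (hF : ∀ v, Wt a 1 (F v))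
    {p : PolyN n} (hp : ∀ m ∈ p.support, D ≤ mdeg m) : Wt a D (aeval F p) := by
  rw [aeval_def, eval₂_eq]
  apply Wt.sum
  intro m hm
  have h1 : Wt a 0 (algebraMap ℂ (PS n) (MvPolynomial.coeff m p)) := Wt.algebraMap' _
  have h2 : Wt a (∑ i ∈ m.support, m i) (∏ i ∈ m.support, F i ^ m i) :=
    Wt.prod (fun i _ => by simpa using Wt.pow (hF i) (m i))
  have h3 := Wt.mul h1 h2
  rw [zero_add] at h3
  refine h3.mono ?_
  calc D ≤ mdeg m := hp m hm
  _ = ∑ i ∈ m.support, m i := rfl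

lemma Wt.X_mul {a c c' : ℕ} {f : PS n} (hf : Wt a c f) (hc : a + c' ≤ c) :
    Wt a c' (PowerSeries.X * f) := by
  intro s m hm
  cases s with
  | zero =>
      exfalso
      have : (PowerSeries.coeff (R := PolyN n) 0) (PowerSeries.X * f) = 0 := by
        rw [PowerSeries.coeff_zero_eq_constantCoeff, map_mul]
        simp
      rw [this] at hm; simp at hm
  | succ s =>
      rw [PowerSeries.coeff_succ_X_mul] at hm
      have := hf s m hm
      have ha : a * (s + 1) = a * s + a := by ring
      omega

lemma Wt.CX {a : ℕ} (v : Fin n ⊕ Fin n) : Wt a 1 (PowerSeries.C (R := PolyN n) (X v)) := by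
  apply Wt.C_poly
  intro m hm
  rw [MvPolynomial.support_X] at hm
  rw [Finset.mem_singleton.mp hm]
  simp [mdeg, Finsupp.sum_single_index]

/-- truncation: `aeval` coefficients up to `s` only depend on input coefficients up to `s`. -/
lemma coeff_aeval_congr {s : ℕ} {F G : Fin n ⊕ Fin n → PS n}
    (h : ∀ v, ∀ i ≤ s, PowerSeries.coeff (R := PolyN n) i (F v) = PowerSeries.coeff (R := PolyN n) i (G v))
    (p : PolyN n) :
    ∀ i ≤ s, PowerSeries.coeff (R := PolyN n) i (aeval F p) = PowerSeries.coeff (R := PolyN n) i (aeval G p) := by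
  induction p using MvPolynomial.induction_on with
  | C a => intro i hi; simp
  | add p q hp hq => intro i hi; rw [map_add, map_add, map_add, map_add, hp i hi, hq i hi]
  | mul_X p v hp =>
      intro i hi
      rw [show (aeval F) (p * X v) = aeval F p * F v by rw [map_mul, aeval_X],
        show (aeval G) (p * X v) = aeval G p * G v by rw [map_mul, aeval_X],
        PowerSeries.coeff_mul, PowerSeries.coeff_mul]
      refine Finset.sum_congr rfl fun x hx => ?_
      have hxs : x.1 + x.2 = i := Finset.HasAntidiagonal.mem_antidiagonal.mp hx
      rw [hp x.1 (le_trans (by omega) hi), h v x.2 (le_trans (by omega) hi)]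

noncomputable def T (Q : Fin n ⊕ Fin n → PolyN n) : ℕ → (Fin n ⊕ Fin n) → PS n
  | 0 => fun v => PowerSeries.C (R := PolyN n) (X v)
  | (t + 1) => fun v => PowerSeries.C (R := PolyN n) (X v)
      + PowerSeries.X * MvPolynomial.aeval (T Q t) (Q v)

lemma coeff_T_zero' (Q : Fin n ⊕ Fin n → PolyN n) (t : ℕ) (v) :
    PowerSeries.coeff (R := PolyN n) 0 (T Q t v) = X v := by
  cases t with
  | zero => simp [T]
  | succ t =>
      simp only [T, map_add, PowerSeries.coeff_zero_eq_constantCoeff, map_mul]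
      simp

lemma coeff_T_succ (Q : Fin n ⊕ Fin n → PolyN n) (t s : ℕ) (v) :
    PowerSeries.coeff (R := PolyN n) (s + 1) (T Q (t + 1) v)
      = PowerSeries.coeff (R := PolyN n) s (aeval (T Q t) (Q v)) := by
  simp [T, PowerSeries.coeff_succ_X_mul, PowerSeries.coeff_C]

lemma coeff_T_zero_succ (Q : Fin n ⊕ Fin n → PolyN n) (s : ℕ) (v) :
    PowerSeries.coeff (R := PolyN n) (s + 1) (T Q 0 v) = 0 := by
  simp [T, PowerSeries.coeff_C]

lemma stab_succ (Q : Fin n ⊕ Fin n → PolyN n) :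
    ∀ t, ∀ v, ∀ i ≤ t, PowerSeries.coeff (R := PolyN n) i (T Q (t + 1) v)
      = PowerSeries.coeff (R := PolyN n) i (T Q t v) := by
  intro t
  induction t with
  | zero =>
      intro v i hi
      interval_cases i
      rw [coeff_T_zero', coeff_T_zero']
  | succ t ih =>
      intro v i hi
      cases i with
      | zero => rw [coeff_T_zero', coeff_T_zero']
      | succ j =>
          rw [coeff_T_succ, coeff_T_succ]
          exact coeff_aeval_congr (s := t) (fun u i hiu => ih u i hiu) (Q v) j (by omega)

lemma stab (Q : Fin n ⊕ Fin n → PolyN n) {i t t' : ℕ} (h1 : i ≤ t) (h2 : t ≤ t') (v) :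
    PowerSeries.coeff (R := PolyN n) i (T Q t' v) = PowerSeries.coeff (R := PolyN n) i (T Q t v) := by
  induction t' , h2 using Nat.le_induction with
  | base => rfl
  | succ t' ht ih => rw [stab_succ Q t' v i (by omega), ih]

noncomputable def Rdef (Q : Fin n ⊕ Fin n → PolyN n) (v : Fin n ⊕ Fin n) (t : ℕ) : PolyN n :=
  PowerSeries.coeff (R := PolyN n) t (T Q t v)

lemma coeff_mk_R (Q : Fin n ⊕ Fin n → PolyN n) (v) {i t : ℕ} (hit : i ≤ t) :
    PowerSeries.coeff (R := PolyN n) i (PowerSeries.mk (Rdef Q v)) =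
      PowerSeries.coeff (R := PolyN n) i (T Q t v) := by
  rw [PowerSeries.coeff_mk, Rdef, stab Q (le_refl i) hit]

lemma hFix (Q : Fin n ⊕ Fin n → PolyN n) (v) :
    PowerSeries.mk (Rdef Q v) = PowerSeries.C (R := PolyN n) (X v)
      + PowerSeries.X * aeval (fun u => PowerSeries.mk (Rdef Q u)) (Q v) := by
  refine PowerSeries.ext fun s => ?_
  cases s with
  | zero =>
      rw [coeff_mk_R Q v (le_refl 0), coeff_T_zero']
      simp only [map_add, PowerSeries.coeff_zero_eq_constantCoeff, map_mul]
      simp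
  | succ s =>
      rw [coeff_mk_R Q v (le_refl (s+1)), coeff_T_succ, map_add, PowerSeries.coeff_C,
        if_neg (Nat.succ_ne_zero s), PowerSeries.coeff_succ_X_mul, zero_add]
      exact (coeff_aeval_congr (s := s) (fun u i hiu => coeff_mk_R Q u hiu) (Q v) s le_rfl).symm

lemma wt_T {a : ℕ} (Q : Fin n ⊕ Fin n → PolyN n)
    (hQ : ∀ v, ∀ m ∈ (Q v).support, a + 1 ≤ mdeg m) :
    ∀ t v, Wt a 1 (T Q t v) := by
  intro t
  induction t with
  | zero => intro v; exact Wt.CX v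
  | succ t ih =>
      intro v
      exact Wt.add (Wt.CX v) ((wt_aeval ih (hQ v)).X_mul le_rfl)

lemma constCoeff_aeval_CX (p : PolyN n) :
    PowerSeries.constantCoeff (R := PolyN n)
      (aeval (fun v => PowerSeries.C (R := PolyN n) (X v)) p) = p := by
  induction p using MvPolynomial.induction_on with
  | C a => simp [PowerSeries.algebraMap_apply, MvPolynomial.algebraMap_eq]
  | add p q hp hq => rw [map_add, map_add, hp, hq]
  | mul_X p v hp => rw [map_mul, map_mul, aeval_X, hp, PowerSeries.constantCoeff_C]

lemma mdeg_conjP {d : ℕ} (p : PolyN n) (hp : ∀ m ∈ p.support, d ≤ mdeg m) :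
    ∀ m ∈ (conjP p).support, d ≤ mdeg m := by
  intro m hm
  rw [conjP] at hm
  have hm' : m ∈ (rename Sum.swap p).support := by
    rw [MvPolynomial.mem_support_iff] at hm ⊢
    intro h0
    rw [MvPolynomial.coeff_map, h0, map_zero] at hm
    exact hm rfl
  have hinj : Function.Injective (Sum.swap : Fin n ⊕ Fin n → Fin n ⊕ Fin n) :=
    fun a b h => by rw [← Sum.swap_swap a, h, Sum.swap_swap]
  rw [MvPolynomial.support_rename_of_injective hinj] at hm'
  obtain ⟨m', hm's, rfl⟩ := Finset.mem_image.mp hm'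
  rw [mdeg_mapDomain]
  exact hp m' hm's

end FormalInv

/-- Formal inversion of the near-identity transformation `w_k = z_k - α P_k(z)`
(together with its conjugate equation `w̄_k = z̄_k - α conj(P_k)(z)`): there is a formal power
series `z_v = ∑_t α^t R_{v,t}(w)` with `R_{v,0} = w_v`, `R_{v,1} = P_v` (resp. its conjugate),
each `R_{v,t}` of lower degree at least `(d-1)t + 1`, solving the transformation formally. -/
theorem formal_inversion (n d : ℕ) (hd : 2 ≤ d) (P : Fin n → PolyN n)
    (hP : ∀ k, ∀ m ∈ (P k).support, d ≤ mdeg m) :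
    ∃ R : (Fin n ⊕ Fin n) → ℕ → PolyN n,
      (∀ v, R v 0 = X v) ∧
      (∀ k, R (Sum.inl k) 1 = P k) ∧
      (∀ k, R (Sum.inr k) 1 = conjP (P k)) ∧
      (∀ v t, ∀ m ∈ (R v t).support, (d - 1) * t + 1 ≤ mdeg m) ∧
      (∀ k : Fin n,
        PowerSeries.mk (R (Sum.inl k))
            - PowerSeries.X * MvPolynomial.aeval (fun v => PowerSeries.mk (R v)) (P k)
          = PowerSeries.C (R := PolyN n) (X (Sum.inl k))) ∧
      (∀ k : Fin n,
        PowerSeries.mk (R (Sum.inr k))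
            - PowerSeries.X * MvPolynomial.aeval (fun v => PowerSeries.mk (R v)) (conjP (P k))
          = PowerSeries.C (R := PolyN n) (X (Sum.inr k))) := by
  classical
  set Q : (Fin n ⊕ Fin n) → PolyN n := Sum.elim P (fun k => conjP (P k)) with hQdef
  have hQ : ∀ v, ∀ m ∈ (Q v).support, d ≤ mdeg m := by
    intro v
    cases v with
    | inl k => exact hP k
    | inr k => exact FormalInv.mdeg_conjP (P k) (hP k)
  have hcoeff1 : ∀ v, FormalInv.Rdef Q v 1 = Q v := by
    intro v
    rw [FormalInv.Rdef, show (1:ℕ) = 0 + 1 from rfl, FormalInv.coeff_T_succ,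
      PowerSeries.coeff_zero_eq_constantCoeff]
    exact FormalInv.constCoeff_aeval_CX (Q v)
  refine ⟨FormalInv.Rdef Q, ?_, ?_, ?_, ?_, ?_, ?_⟩
  · intro v
    rw [FormalInv.Rdef, FormalInv.coeff_T_zero']
  · intro k; exact hcoeff1 (Sum.inl k)
  · intro k; exact hcoeff1 (Sum.inr k)
  · intro v t m hm
    have hQ' : ∀ v, ∀ m ∈ (Q v).support, (d - 1) + 1 ≤ mdeg m := by
      intro v m hm
      have := hQ v m hm
      omega
    have := FormalInv.wt_T Q hQ' t v t m hm
    omega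
  · intro k
    have h := FormalInv.hFix Q (Sum.inl k)
    have e : Q (Sum.inl k) = P k := rfl
    rw [e] at h
    rw [h]
    ring
  · intro k
    have h := FormalInv.hFix Q (Sum.inr k)
    have e : Q (Sum.inr k) = conjP (P k) := rfl
    rw [e] at h
    rw [h]
    ring
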